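/- arXiv:2006.13714 — 2 statements merged into one kernel-verified Lean document; each statement's English description precedes it below -/
import Mathlib

section
/- Let M, n be positive integers, let x_1, …, x_M ∈ ℝⁿ (the vectorized image patches), fix a reference index i, and define b ∈ ℝ^M by b(j) = ⟨x_i, x_j⟩ − (1/2)‖x_j‖² (i.e., the Self-Convolution values minus half the squared patch norms, which by Lemma 2 equals −(1/2)‖x_j − x_i‖² + (1/2)‖x_i‖²). Assume b(j) ≥ 0 for all j. Let K ≤ M and let Ω ⊆ {1, …, M} with |Ω| = K be such that |b(j)| ≥ |b(j')| for all j ∈ Ω, j' ∉ Ω (so Ω is the support of the ℓ₀-constrained minimizer of ‖b − a‖² subject to ‖a‖₀ ≤ K). Then Ω solves Euclidean-distance block matching over subsets of size K: for every S ⊆ {1, …, M} with |S| = K, Σ_{j∈Ω} ‖x_j − x_i‖² ≤ Σ_{j∈S} ‖x_j − x_i‖². -/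
open RealInnerProductSpace

/-- Euclidean-distance case of Theorem 1: the support `Ω` of the ℓ₀-constrained
Self-Convolution solution (the top-`K` largest-magnitude entries of
`b j = ⟨x_i, x_j⟩ − ‖x_j‖²/2`, assumed nonnegative) solves Euclidean-distance block
matching: it minimizes `∑_{j∈S} ‖x_j − x_i‖²` over subsets `S` of size `K`. -/
theorem self_convolution_block_matching_euclidean
    (M n : ℕ) (hM : 0 < M) (hn : 0 < n)
    (x : Fin M → EuclideanSpace ℝ (Fin n)) (i : Fin M)
    (b : Fin M → ℝ)
    (hb : ∀ j, b j = ⟪x i, x j⟫ - (1 / 2) * ‖x j‖ ^ 2)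
    (hbnn : ∀ j, 0 ≤ b j)
    (K : ℕ) (hK : K ≤ M)
    (Ω : Finset (Fin M)) (hcard : Ω.card = K)
    (htop : ∀ j ∈ Ω, ∀ j' ∉ Ω, |b j'| ≤ |b j|) :
    ∀ S : Finset (Fin M), S.card = K →
      ∑ j ∈ Ω, ‖x j - x i‖ ^ 2 ≤ ∑ j ∈ S, ‖x j - x i‖ ^ 2 := by
  intro S hS
  -- key identity : ‖x j - x i‖² = ‖x i‖² - 2 * b j
  have hid : ∀ j, ‖x j - x i‖ ^ 2 = ‖x i‖ ^ 2 - 2 * b j := by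
    intro j
    have := @norm_sub_sq_real (EuclideanSpace ℝ (Fin n)) _ _ (x j) (x i)
    rw [this, hb j, real_inner_comm (x i) (x j)]
    ring
  -- key inequality : ∑_S b ≤ ∑_Ω b
  have hsum : ∑ j ∈ S, b j ≤ ∑ j ∈ Ω, b j := by
    have hcard2 : (S \ Ω).card = (Ω \ S).card := by
      have h1 := Finset.card_sdiff_add_card_inter S Ω
      have h2 := Finset.card_sdiff_add_card_inter Ω S
      rw [Finset.inter_comm] at h2
      omega
    have hkey : ∑ j ∈ S \ Ω, b j ≤ ∑ j ∈ Ω \ S, b j := by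
      rcases Finset.eq_empty_or_nonempty (Ω \ S) with he | hne
      · have : (S \ Ω) = ∅ := Finset.card_eq_zero.mp (by rw [hcard2, he]; simp)
        simp [this, he]
      · set c := (Ω \ S).inf' hne b with hc
        obtain ⟨j₀, hj₀, hj₀c⟩ := Finset.exists_mem_eq_inf' hne b
        have h1 : ∑ j ∈ S \ Ω, b j ≤ (S \ Ω).card • c := by
          apply Finset.sum_le_card_nsmul
          intro j hj
          have hjn : j ∉ Ω := (Finset.mem_sdiff.mp hj).2
          have := htop j₀ (Finset.mem_sdiff.mp hj₀).1 j hjn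
          rw [abs_of_nonneg (hbnn j), abs_of_nonneg (hbnn j₀)] at this
          rw [hc, hj₀c]; exact this
        have h2 : (Ω \ S).card • c ≤ ∑ j ∈ Ω \ S, b j := by
          apply Finset.card_nsmul_le_sum
          intro j hj
          exact Finset.inf'_le b hj
        calc ∑ j ∈ S \ Ω, b j ≤ (S \ Ω).card • c := h1
          _ = (Ω \ S).card • c := by rw [hcard2]
          _ ≤ ∑ j ∈ Ω \ S, b j := h2
    have hS1 : ∑ j ∈ S \ Ω, b j + ∑ j ∈ S ∩ Ω, b j = ∑ j ∈ S, b j :=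
      Finset.sum_inter_add_sum_sdiff S Ω b ▸ by rw [add_comm]
    have hΩ1 : ∑ j ∈ Ω \ S, b j + ∑ j ∈ Ω ∩ S, b j = ∑ j ∈ Ω, b j :=
      Finset.sum_inter_add_sum_sdiff Ω S b ▸ by rw [add_comm]
    have hint : ∑ j ∈ S ∩ Ω, b j = ∑ j ∈ Ω ∩ S, b j := by rw [Finset.inter_comm]
    linarith
  calc ∑ j ∈ Ω, ‖x j - x i‖ ^ 2 = ∑ j ∈ Ω, (‖x i‖ ^ 2 - 2 * b j) := by
        simp_rw [hid]
    _ = Ω.card * ‖x i‖ ^ 2 - 2 * ∑ j ∈ Ω, b j := by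
        rw [Finset.sum_sub_distrib, Finset.sum_const, ← Finset.mul_sum]
        simp [nsmul_eq_mul]
    _ ≤ S.card * ‖x i‖ ^ 2 - 2 * ∑ j ∈ S, b j := by
        rw [hcard, hS]; linarith
    _ = ∑ j ∈ S, (‖x i‖ ^ 2 - 2 * b j) := by
        rw [Finset.sum_sub_distrib, Finset.sum_const, ← Finset.mul_sum]
        simp [nsmul_eq_mul]
    _ = ∑ j ∈ S, ‖x j - x i‖ ^ 2 := by simp_rw [hid]
end

section
/- Let p, q be positive integers and let Z be a real p × q matrix with full singular value decomposition Z = U · S · Vᵀ, where U is a p × p matrix with UᵀU = I, V is a q × q matrix with VᵀV = I, and S is a p × q matrix with S(k,k) = σ_k ≥ 0 for k ≤ min(p,q), σ_1 ≥ σ_2 ≥ … ≥ σ_{min(p,q)}, and all off-diagonal entries zero. Let θ > 0 and let H_θ(S) be the p × q matrix obtained from S by replacing each diagonal entry σ_k with σ_k if σ_k > θ and with 0 otherwise. Then D̂ = U · H_θ(S) · Vᵀ is a global minimizer of the rank-penalized approximation problem: for every real p × q matrix D, ‖Z − D̂‖_F² + θ²·rank(D̂) ≤ ‖Z − D‖_F²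 + θ²·rank(D). -/
open Matrix

namespace SVDHT


lemma frob_trace {p q : ℕ} (A : Matrix (Fin p) (Fin q) ℝ) :
    (A * Aᵀ).trace = ∑ i, ∑ j, A i j ^ 2 := by
  simp [Matrix.trace, Matrix.mul_apply, Matrix.diag, sq]

lemma trace_sq_nonneg {p q : ℕ} (A : Matrix (Fin p) (Fin q) ℝ) :
    0 ≤ (A * Aᵀ).trace := by
  rw [frob_trace]; positivity

lemma lemmaA {p q s : ℕ} (A : Matrix (Fin p) (Fin q) ℝ) (X : Matrix (Fin s) (Fin q) ℝ)
    (hX : X * Xᵀ = 1) :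
    ((A * Xᵀ) * (A * Xᵀ)ᵀ).trace ≤ (A * Aᵀ).trace := by
  set Q : Matrix (Fin q) (Fin q) ℝ := 1 - Xᵀ * X with hQ
  have hQT : Qᵀ = Q := by simp [hQ, Matrix.transpose_sub, Matrix.transpose_mul]
  have hQ2 : Q * Q = Q := by
    have : Xᵀ * X * (Xᵀ * X) = Xᵀ * X := by
      calc Xᵀ * X * (Xᵀ * X) = Xᵀ * (X * Xᵀ) * X := by
            simp [Matrix.mul_assoc]
        _ = Xᵀ * X := by rw [hX]; simp [Matrix.mul_assoc]
    simp [hQ, Matrix.sub_mul, Matrix.mul_sub, this]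
  have key : (A * Q) * (A * Q)ᵀ = A * Aᵀ - (A * Xᵀ) * (A * Xᵀ)ᵀ := by
    have h1 : (A * Q) * (A * Q)ᵀ = A * Q * Aᵀ := by
      rw [Matrix.transpose_mul, hQT]
      calc A * Q * (Q * Aᵀ) = A * (Q * Q) * Aᵀ := by simp [Matrix.mul_assoc]
        _ = A * Q * Aᵀ := by rw [hQ2]
    rw [h1, hQ, Matrix.mul_sub, Matrix.sub_mul]
    simp [Matrix.transpose_mul, Matrix.mul_assoc]
  have h0 := trace_sq_nonneg (A * Q)
  rw [key, Matrix.trace_sub] at h0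
  linarith

lemma lemmaB {q s : ℕ} (X : Matrix (Fin s) (Fin q) ℝ) (hX : X * Xᵀ = 1) (k : Fin q) :
    ∑ i, (X i k) ^ 2 ≤ 1 := by
  set Q : Matrix (Fin q) (Fin q) ℝ := 1 - Xᵀ * X with hQ
  have hQT : Qᵀ = Q := by simp [hQ, Matrix.transpose_sub, Matrix.transpose_mul]
  have hQ2 : Q * Q = Q := by
    have : Xᵀ * X * (Xᵀ * X) = Xᵀ * X := by
      calc Xᵀ * X * (Xᵀ * X) = Xᵀ * (X * Xᵀ) * X := by simp [Matrix.mul_assoc]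
        _ = Xᵀ * X := by rw [hX]; simp [Matrix.mul_assoc]
    simp [hQ, Matrix.sub_mul, Matrix.mul_sub, this]
  have hsym : ∀ a b, Q a b = Q b a := by
    intro a b
    conv_lhs => rw [← hQT]
    rfl
  have h1 : Q k k = ∑ j, (Q j k) ^ 2 := by
    conv_lhs => rw [← hQ2]
    rw [Matrix.mul_apply]
    refine Finset.sum_congr rfl fun j _ => ?_
    rw [hsym k j, sq]
  have h2 : 0 ≤ ∑ j, (Q j k) ^ 2 := by positivity
  have h3 : Q k k = 1 - ∑ i, (X i k) ^ 2 := by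
    simp [hQ, Matrix.sub_apply, Matrix.mul_apply, Matrix.one_apply_eq, sq]
  rw [h3] at h1
  linarith [h1 ▸ h2]

lemma frob_conj {p q : ℕ} (U : Matrix (Fin p) (Fin p) ℝ) (V : Matrix (Fin q) (Fin q) ℝ)
    (hU : Uᵀ * U = 1) (hV : Vᵀ * V = 1) (A : Matrix (Fin p) (Fin q) ℝ) :
    ∑ i, ∑ j, ((U * A * Vᵀ) i j) ^ 2 = ∑ i, ∑ j, (A i j) ^ 2 := by
  rw [← frob_trace, ← frob_trace]
  have h1 : (U * A * Vᵀ) * (U * A * Vᵀ)ᵀ = U * (A * Aᵀ) * Uᵀ := by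
    rw [Matrix.transpose_mul, Matrix.transpose_mul, Matrix.transpose_transpose]
    calc U * A * Vᵀ * (V * (Aᵀ * Uᵀ)) = U * A * (Vᵀ * V) * (Aᵀ * Uᵀ) := by
          simp [Matrix.mul_assoc]
      _ = U * (A * Aᵀ) * Uᵀ := by rw [hV]; simp [Matrix.mul_assoc]
  rw [h1]
  calc (U * (A * Aᵀ) * Uᵀ).trace = ((A * Aᵀ) * Uᵀ * U).trace := by
        rw [Matrix.mul_assoc, Matrix.trace_mul_comm, Matrix.mul_assoc]
    _ = (A * Aᵀ).trace := by rw [Matrix.mul_assoc, hU]; simp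

lemma exists_ortho_ker {p q : ℕ} (M : Matrix (Fin p) (Fin q) ℝ) :
    ∃ X : Matrix (Fin (q - M.rank)) (Fin q) ℝ, X * Xᵀ = 1 ∧ M * Xᵀ = 0 := by
  classical
  let e := (WithLp.linearEquiv 2 ℝ (Fin q → ℝ))
  let g : EuclideanSpace ℝ (Fin q) →ₗ[ℝ] (Fin p → ℝ) := M.mulVecLin.comp e.toLinearMap
  have hrange : LinearMap.range g = LinearMap.range M.mulVecLin := by
    rw [LinearMap.range_comp, LinearEquiv.range, Submodule.map_top]
  have hrk : M.rank ≤ q := by simpa using M.rank_le_card_width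
  have hnull := LinearMap.finrank_range_add_finrank_ker g
  rw [hrange] at hnull
  have hdim : Module.finrank ℝ (EuclideanSpace ℝ (Fin q)) = q := by
    simp [finrank_euclideanSpace]
  have hk : Module.finrank ℝ (LinearMap.ker g) = q - M.rank := by
    rw [hdim] at hnull
    have : M.rank + Module.finrank ℝ (LinearMap.ker g) = q := hnull
    omega
  let b := (stdOrthonormalBasis ℝ (LinearMap.ker g)).reindex (finCongr hk)
  refine ⟨Matrix.of fun i l => ((b i : EuclideanSpace ℝ (Fin q)) l), ?_, ?_⟩
  · ext i j
    have hon := b.orthonormal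
    rw [orthonormal_iff_ite] at hon
    have := hon i j
    rw [Submodule.coe_inner] at this
    simp only [PiLp.inner_apply, RCLike.inner_apply, conj_trivial] at this
    simp only [Matrix.mul_apply, Matrix.transpose_apply, Matrix.of_apply, Matrix.one_apply]
    rw [← this]; exact Finset.sum_congr rfl fun _ _ => mul_comm _ _
  · ext k i
    have hmem : (b i : EuclideanSpace ℝ (Fin q)) ∈ LinearMap.ker g := (b i).2
    rw [LinearMap.mem_ker] at hmem
    have : M.mulVec ((b i : EuclideanSpace ℝ (Fin q)) : Fin q → ℝ) = 0 := hmem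
    have hk2 := congrFun this k
    simp only [Matrix.mul_apply, Matrix.transpose_apply, Matrix.of_apply, Matrix.zero_apply]
    simpa [Matrix.mulVec, dotProduct] using hk2

lemma card_filter_le {q r : ℕ} (hr : r ≤ q) :
    (Finset.univ.filter (fun k : Fin q => r ≤ (k : ℕ))).card = q - r := by
  rw [Finset.card_filter]
  rw [Fin.sum_univ_eq_sum_range (fun n => if r ≤ n then 1 else 0) q]
  rw [← Finset.card_filter]
  have : (Finset.range q).filter (fun n => r ≤ n) = Finset.Ico r q := by
    ext n; simp [Finset.mem_range, Finset.mem_Ico]; omega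
  rw [this, Nat.card_Ico]

lemma lemE {q : ℕ} (a c : Fin q → ℝ) (r : ℕ) (hr : r ≤ q)
    (ha : ∀ k k' : Fin q, (k : ℕ) ≤ (k' : ℕ) → a k' ≤ a k) (han : ∀ k, 0 ≤ a k)
    (hc0 : ∀ k, 0 ≤ c k) (hc1 : ∀ k, c k ≤ 1)
    (hcs : ∑ k, c k = ((q - r : ℕ) : ℝ)) :
    ∑ k ∈ Finset.univ.filter (fun k : Fin q => r ≤ (k : ℕ)), a k ≤ ∑ k, a k * c k := by
  rcases eq_or_lt_of_le hr with h | h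
  · have he : Finset.univ.filter (fun k : Fin q => r ≤ (k : ℕ)) = ∅ := by
      ext k; simp only [Finset.mem_filter, Finset.mem_univ, true_and, Finset.notMem_empty,
        iff_false]
      have := k.isLt; omega
    rw [he, Finset.sum_empty]
    exact Finset.sum_nonneg fun k _ => mul_nonneg (han k) (hc0 k)
  · set F := Finset.univ.filter (fun k : Fin q => r ≤ (k : ℕ)) with hF
    set t := a ⟨r, h⟩ with htdef
    have hFcard : (F.card : ℝ) = ((q - r : ℕ) : ℝ) := by
      rw [hF, card_filter_le hr]
    set sF := ∑ k ∈ F, c k with hsF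
    set sN := ∑ k ∈ Finset.univ.filter (fun k : Fin q => ¬ r ≤ (k : ℕ)), c k with hsN
    have hsum : sF + sN = ((q - r : ℕ) : ℝ) := by
      rw [hsF, hsN, Finset.sum_filter_add_sum_filter_not]; exact hcs
    have h1 : ∑ k ∈ F, a k + t * (sF - ((q - r : ℕ) : ℝ)) ≤ ∑ k ∈ F, a k * c k := by
      have key2 : ∀ k ∈ F, a k + t * (c k - 1) ≤ a k * c k := by
        intro k hk
        rw [hF, Finset.mem_filter] at hk
        have hak : a k ≤ t := ha ⟨r, h⟩ k hk.2
        have hck : c k ≤ 1 := hc1 k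
        nlinarith
      calc ∑ k ∈ F, a k + t * (sF - ((q - r : ℕ) : ℝ))
          = ∑ k ∈ F, (a k + t * (c k - 1)) := by
            rw [Finset.sum_add_distrib, ← Finset.mul_sum, Finset.sum_sub_distrib,
              Finset.sum_const, nsmul_eq_mul, mul_one, ← hFcard, hsF]
        _ ≤ ∑ k ∈ F, a k * c k := Finset.sum_le_sum key2
    have h2 : t * sN ≤ ∑ k ∈ Finset.univ.filter (fun k : Fin q => ¬ r ≤ (k : ℕ)), a k * c k := by
      rw [hsN, Finset.mul_sum]
      refine Finset.sum_le_sum fun k hk => ?_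
      rw [Finset.mem_filter] at hk
      exact mul_le_mul_of_nonneg_right (ha k ⟨r, h⟩ (show (k : ℕ) ≤ r by omega)) (hc0 k)
    have heq : t * (sF - ((q - r : ℕ) : ℝ)) + t * sN = 0 := by
      have hx : sF - ((q - r : ℕ) : ℝ) = -sN := by linarith
      rw [hx]; ring
    rw [← Finset.sum_filter_add_sum_filter_not Finset.univ (fun k : Fin q => r ≤ (k : ℕ))
      (fun k => a k * c k)]
    linarith

lemma diag_double_sum {p q : ℕ} (f : Fin p → Fin q → ℝ)
    (hf : ∀ (i : Fin p) (j : Fin q), (i : ℕ) ≠ (j : ℕ) → f i j = 0) :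
    ∑ i, ∑ j, f i j = ∑ l : Fin q, (if h : (l : ℕ) < p then f ⟨(l : ℕ), h⟩ l else 0) := by
  rw [Finset.sum_comm]
  refine Finset.sum_congr rfl fun l _ => ?_
  by_cases h : (l : ℕ) < p
  · rw [dif_pos h]
    refine Finset.sum_eq_single ⟨(l : ℕ), h⟩ (fun i _ hne => hf i l fun hc => hne (Fin.ext hc))
      (fun hmem => absurd (Finset.mem_univ _) hmem)
  · rw [dif_neg h]
    exact Finset.sum_eq_zero fun i _ => hf i l (by have := i.isLt; omega)

lemma cross' {p q : ℕ} (f : Fin p → ℝ) (g : Fin q → ℝ)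
    (h : ∀ (i : Fin p) (l : Fin q), (i : ℕ) = (l : ℕ) → f i = g l)
    (hf0 : ∀ i : Fin p, q ≤ (i : ℕ) → f i = 0)
    (hg0 : ∀ l : Fin q, p ≤ (l : ℕ) → g l = 0) :
    ∑ i, f i = ∑ l, g l := by
  classical
  set F : ℕ → ℝ := fun n => if h : n < p then f ⟨n, h⟩ else 0 with hF
  set G : ℕ → ℝ := fun n => if h : n < q then g ⟨n, h⟩ else 0 with hG
  have h1 : ∑ i, f i = ∑ n ∈ Finset.range p, F n := by
    rw [← Fin.sum_univ_eq_sum_range F p]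
    exact Finset.sum_congr rfl fun i _ => by simp [hF, i.isLt]
  have h2 : ∑ l, g l = ∑ n ∈ Finset.range q, G n := by
    rw [← Fin.sum_univ_eq_sum_range G q]
    exact Finset.sum_congr rfl fun l _ => by simp [hG, l.isLt]
  have h3 : ∑ n ∈ Finset.range p, F n = ∑ n ∈ Finset.range (min p q), F n := by
    refine (Finset.sum_subset (by intro n hn; simp at hn ⊢; omega) ?_).symm
    intro n hn hn2
    simp only [Finset.mem_range] at hn hn2
    have hq : q ≤ n := by omega
    simp only [hF, dif_pos hn]
    exact hf0 ⟨n, hn⟩ hq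
  have h4 : ∑ n ∈ Finset.range q, G n = ∑ n ∈ Finset.range (min p q), G n := by
    refine (Finset.sum_subset (by intro n hn; simp at hn ⊢; omega) ?_).symm
    intro n hn hn2
    simp only [Finset.mem_range] at hn hn2
    have hp : p ≤ n := by omega
    simp only [hG, dif_pos hn]
    exact hg0 ⟨n, hn⟩ hp
  rw [h1, h2, h3, h4]
  refine Finset.sum_congr rfl fun n hn => ?_
  simp only [Finset.mem_range, lt_min_iff] at hn
  simp only [hF, hG, dif_pos hn.1, dif_pos hn.2]
  exact h _ _ rfl

lemma diag_core {p q : ℕ} (θ : ℝ) (hθ : 0 < θ)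
    (S T : Matrix (Fin p) (Fin q) ℝ)
    (hSoff : ∀ (k : Fin p) (l : Fin q), (k : ℕ) ≠ (l : ℕ) → S k l = 0)
    (hSnn : ∀ (k : Fin p) (l : Fin q), (k : ℕ) = (l : ℕ) → 0 ≤ S k l)
    (hSdec : ∀ (k k' : Fin p) (l l' : Fin q),
      (k : ℕ) = (l : ℕ) → (k' : ℕ) = (l' : ℕ) → (k : ℕ) ≤ (k' : ℕ) → S k' l' ≤ S k l)
    (hT : ∀ (k : Fin p) (l : Fin q),
      T k l = if (k : ℕ) = (l : ℕ) ∧ θ < S k l then S k l else 0)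
    (M : Matrix (Fin p) (Fin q) ℝ) :
    (∑ i, ∑ j, ((S - T) i j) ^ 2) + θ ^ 2 * (T.rank : ℝ)
      ≤ (∑ i, ∑ j, ((S - M) i j) ^ 2) + θ ^ 2 * (M.rank : ℝ) := by
  classical
  set σ : Fin q → ℝ := fun l => if h : (l : ℕ) < p then S ⟨(l : ℕ), h⟩ l else 0 with hσ
  have hσnn : ∀ l, 0 ≤ σ l := by
    intro l; simp only [hσ]
    split
    · exact hSnn _ _ rfl
    · exact le_refl 0
  have hσS : ∀ (k : Fin p) (l : Fin q), (k : ℕ) = (l : ℕ) → σ l = S k l := by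
    intro k l hkl
    have hlp : (l : ℕ) < p := hkl ▸ k.isLt
    simp only [hσ, dif_pos hlp]
    congr 1
    exact Fin.ext hkl.symm
  have hσdec : ∀ l l' : Fin q, (l : ℕ) ≤ (l' : ℕ) → σ l' ≤ σ l := by
    intro l l' hll
    by_cases h' : (l' : ℕ) < p
    · have h : (l : ℕ) < p := lt_of_le_of_lt hll h'
      simp only [hσ, dif_pos h', dif_pos h]
      exact hSdec ⟨l, h⟩ ⟨l', h'⟩ l l' rfl rfl hll
    · simp only [hσ, dif_neg h']
      exact hσnn l
  set φ : Fin q → ℝ := fun l => if θ < σ l then θ ^ 2 else (σ l) ^ 2 with hφ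
  have hTdiag : ∀ (k : Fin p) (l : Fin q), (k : ℕ) = (l : ℕ) →
      T k l = if θ < σ l then σ l else 0 := by
    intro k l hkl
    rw [hT k l, hσS k l hkl]
    simp [hkl]
  -- Part 1a
  have hpart1a : ∑ i, ∑ j, ((S - T) i j) ^ 2
      = ∑ l, (if θ < σ l then 0 else (σ l) ^ 2) := by
    have hoff : ∀ (i : Fin p) (j : Fin q), (i : ℕ) ≠ (j : ℕ) → ((S - T) i j) ^ 2 = 0 := by
      intro i j hij
      rw [Matrix.sub_apply, hSoff i j hij, hT i j, if_neg (by tauto)]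
      ring
    rw [diag_double_sum _ hoff]
    refine Finset.sum_congr rfl fun l _ => ?_
    by_cases h : (l : ℕ) < p
    · rw [dif_pos h, Matrix.sub_apply, hTdiag ⟨(l : ℕ), h⟩ l rfl, ← hσS ⟨(l : ℕ), h⟩ l rfl]
      by_cases hb : θ < σ l
      · rw [if_pos hb, if_pos hb]; ring
      · rw [if_neg hb, if_neg hb]; ring
    · rw [dif_neg h]
      have hσ0 : σ l = 0 := by simp [hσ, dif_neg h]
      rw [hσ0, if_neg (by linarith)]
      norm_num
  -- Part 1b : rank T bound
  set Fq := Finset.univ.filter (fun l : Fin q => θ < σ l) with hFq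
  have hrankT : T.rank ≤ Fq.card := by
    set e : Fin q → ℝ := fun l => if θ < σ l then 1 else 0 with he
    have hTe : T * Matrix.diagonal e = T := by
      ext k l
      rw [Matrix.mul_diagonal]
      by_cases hkl : (k : ℕ) = (l : ℕ)
      · rw [hTdiag k l hkl]
        by_cases hb : θ < σ l
        · simp [he, hb]
        · simp [he, hb]
      · rw [hT k l, if_neg (by tauto)]; ring
    calc T.rank = (T * Matrix.diagonal e).rank := by rw [hTe]
      _ ≤ (Matrix.diagonal e).rank := Matrix.rank_mul_le_right _ _
      _ = Fintype.card {l // e l ≠ 0} := Matrix.rank_diagonal e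
      _ = Fq.card := by
          rw [Fintype.card_subtype]
          congr 1
          ext l
          by_cases hb : θ < σ l <;> simp [he, hb, hFq]
  -- Part 1 combine
  have hφcard : ∑ l, (if θ < σ l then 0 else (σ l) ^ 2) + θ ^ 2 * (Fq.card : ℝ)
      = ∑ l, φ l := by
    have h1 : θ ^ 2 * (Fq.card : ℝ) = ∑ l, (if θ < σ l then θ ^ 2 else 0) := by
      rw [← Finset.sum_filter, Finset.sum_const, nsmul_eq_mul, ← hFq, mul_comm]
    rw [h1, ← Finset.sum_add_distrib]
    refine Finset.sum_congr rfl fun l _ => ?_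
    simp only [hφ]
    split_ifs <;> ring
  -- Part 2
  set r := M.rank with hrdef
  have hr : r ≤ q := by simpa using M.rank_le_card_width
  obtain ⟨X, hX, hker⟩ := exists_ortho_ker M
  set c : Fin q → ℝ := fun l => ∑ i, (X i l) ^ 2 with hc
  have hc1 : ∀ l, c l ≤ 1 := fun l => lemmaB X hX l
  have hc0 : ∀ l, 0 ≤ c l := fun l => Finset.sum_nonneg fun i _ => sq_nonneg _
  have hcs : ∑ l, c l = ((q - r : ℕ) : ℝ) := by
    have hrow : ∀ i, ∑ l, (X i l) ^ 2 = 1 := by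
      intro i
      have hXe := congrFun (congrFun hX i) i
      simp only [Matrix.mul_apply, Matrix.transpose_apply, Matrix.one_apply_eq] at hXe
      calc ∑ l, (X i l) ^ 2 = ∑ l, X i l * X i l := by
            simp [pow_two]
        _ = 1 := hXe
    calc ∑ l, c l = ∑ l, ∑ i, (X i l) ^ 2 := rfl
      _ = ∑ i, ∑ l, (X i l) ^ 2 := Finset.sum_comm
      _ = ∑ _i : Fin (q - r), (1 : ℝ) := Finset.sum_congr rfl fun i _ => hrow i
      _ = ((q - r : ℕ) : ℝ) := by simp
  have hSXentry : ∀ (row : Fin p) (j : Fin (q - r)),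
      (S * Xᵀ) row j
        = if h : (row : ℕ) < q then S row ⟨(row : ℕ), h⟩ * X j ⟨(row : ℕ), h⟩ else 0 := by
    intro row j
    rw [Matrix.mul_apply]
    by_cases h : (row : ℕ) < q
    · rw [dif_pos h]
      refine Finset.sum_eq_single (M := ℝ) ((⟨(row : ℕ), h⟩ : Fin q)) (fun l _ hne => ?_)
        (fun hmem => absurd (Finset.mem_univ _) hmem)
      rw [hSoff row l (fun hc => hne (Fin.ext hc.symm)), zero_mul]
    · rw [dif_neg h]
      refine Finset.sum_eq_zero fun l _ => ?_
      rw [hSoff row l (by have := l.isLt; omega), zero_mul]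
  have hcol : ∀ j : Fin (q - r),
      ∑ row, ((S * Xᵀ) row j) ^ 2 = ∑ l, (σ l) ^ 2 * (X j l) ^ 2 := by
    intro j
    refine cross' (fun row => ((S * Xᵀ) row j) ^ 2) (fun l => (σ l) ^ 2 * (X j l) ^ 2) ?_ ?_ ?_
    · intro i l hil
      have hlq : (i : ℕ) < q := hil ▸ l.isLt
      show ((S * Xᵀ) i j) ^ 2 = (σ l) ^ 2 * (X j l) ^ 2
      rw [hSXentry i j, dif_pos hlq]
      have hfl : (⟨(i : ℕ), hlq⟩ : Fin q) = l := Fin.ext hil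
      rw [hfl, ← hσS i l hil]
      ring
    · intro i hqi
      show ((S * Xᵀ) i j) ^ 2 = 0
      rw [hSXentry i j, dif_neg (by omega)]
      ring
    · intro l hpl
      show (σ l) ^ 2 * (X j l) ^ 2 = 0
      have : σ l = 0 := by simp [hσ, dif_neg (show ¬ (l : ℕ) < p by omega)]
      rw [this]; ring
  have hmain2 : ∑ j, ∑ row, ((S * Xᵀ) row j) ^ 2 = ∑ l, (σ l) ^ 2 * c l := by
    rw [Finset.sum_congr rfl fun j _ => hcol j, Finset.sum_comm]
    refine Finset.sum_congr rfl fun l _ => ?_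
    rw [← Finset.mul_sum]
  have htraceineq : ∑ l, (σ l) ^ 2 * c l ≤ ∑ i, ∑ j, ((S - M) i j) ^ 2 := by
    have h1 := lemmaA (S - M) X hX
    have h2 : (S - M) * Xᵀ = S * Xᵀ := by rw [Matrix.sub_mul, hker, sub_zero]
    rw [h2, frob_trace, frob_trace] at h1
    calc ∑ l, (σ l) ^ 2 * c l = ∑ j, ∑ row, ((S * Xᵀ) row j) ^ 2 := hmain2.symm
      _ = ∑ row, ∑ j, ((S * Xᵀ) row j) ^ 2 := Finset.sum_comm
      _ ≤ _ := h1
  have hlemE : ∑ l ∈ Finset.univ.filter (fun l : Fin q => r ≤ (l : ℕ)), (σ l) ^ 2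
      ≤ ∑ l, (σ l) ^ 2 * c l := by
    refine lemE _ c r hr (fun k k' hkk => ?_) (fun k => sq_nonneg _) hc0 hc1 hcs
    have h1 := hσdec k k' hkk
    have h2 := hσnn k'
    nlinarith
  have hφsplit : ∑ l, φ l ≤ θ ^ 2 * (r : ℝ)
      + ∑ l ∈ Finset.univ.filter (fun l : Fin q => r ≤ (l : ℕ)), (σ l) ^ 2 := by
    rw [← Finset.sum_filter_add_sum_filter_not Finset.univ (fun l : Fin q => r ≤ (l : ℕ)) φ]
    have hA : ∑ l ∈ Finset.univ.filter (fun l : Fin q => r ≤ (l : ℕ)), φ l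
        ≤ ∑ l ∈ Finset.univ.filter (fun l : Fin q => r ≤ (l : ℕ)), (σ l) ^ 2 := by
      refine Finset.sum_le_sum fun l _ => ?_
      simp only [hφ]
      split_ifs with hb
      · nlinarith [hσnn l]
      · exact le_refl _
    have hB : ∑ l ∈ Finset.univ.filter (fun l : Fin q => ¬ r ≤ (l : ℕ)), φ l
        ≤ θ ^ 2 * (r : ℝ) := by
      have hcard : (Finset.univ.filter (fun l : Fin q => ¬ r ≤ (l : ℕ))).card = r := by
        have h1 := Finset.card_filter_add_card_filter_not
          (s := (Finset.univ : Finset (Fin q))) (p := fun l : Fin q => r ≤ (l : ℕ))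
        rw [card_filter_le hr] at h1
        simp only [Finset.card_univ, Fintype.card_fin] at h1
        omega
      calc ∑ l ∈ Finset.univ.filter (fun l : Fin q => ¬ r ≤ (l : ℕ)), φ l
          ≤ ∑ l ∈ Finset.univ.filter (fun l : Fin q => ¬ r ≤ (l : ℕ)), θ ^ 2 := by
            refine Finset.sum_le_sum fun l _ => ?_
            simp only [hφ]
            split_ifs with hb
            · exact le_refl _
            · nlinarith [hσnn l, (not_lt.mp hb : σ l ≤ θ)]
        _ = θ ^ 2 * (r : ℝ) := by
            rw [Finset.sum_const, hcard, nsmul_eq_mul, mul_comm]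
    linarith
  have hθ2 : (0 : ℝ) ≤ θ ^ 2 := sq_nonneg θ
  have hrankTR : θ ^ 2 * (T.rank : ℝ) ≤ θ ^ 2 * (Fq.card : ℝ) :=
    mul_le_mul_of_nonneg_left (Nat.cast_le.mpr hrankT) hθ2
  linarith


end SVDHT


open SVDHT

/-- Exact solution of the low-rank approximation step (equation (8)):
given a full SVD `Z = U S Vᵀ`, hard thresholding of the singular values at level
`θ` yields a global minimizer of `‖Z − D‖_F² + θ²·rank(D)`. -/
theorem svd_hard_thresholding_rank_penalized
    (p q : ℕ) (hp : 0 < p) (hq : 0 < q) (θ : ℝ) (hθ : 0 < θ)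
    (Z : Matrix (Fin p) (Fin q) ℝ)
    (U : Matrix (Fin p) (Fin p) ℝ)
    (S : Matrix (Fin p) (Fin q) ℝ)
    (V : Matrix (Fin q) (Fin q) ℝ)
    (hU : Uᵀ * U = 1) (hV : Vᵀ * V = 1)
    (hZ : Z = U * S * Vᵀ)
    (hSoff : ∀ (k : Fin p) (l : Fin q), (k : ℕ) ≠ (l : ℕ) → S k l = 0)
    (hSnn : ∀ (k : Fin p) (l : Fin q), (k : ℕ) = (l : ℕ) → 0 ≤ S k l)
    (hSdec : ∀ (k k' : Fin p) (l l' : Fin q),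
      (k : ℕ) = (l : ℕ) → (k' : ℕ) = (l' : ℕ) → (k : ℕ) ≤ (k' : ℕ) →
        S k' l' ≤ S k l)
    (T : Matrix (Fin p) (Fin q) ℝ)
    (hT : ∀ (k : Fin p) (l : Fin q),
      T k l = if (k : ℕ) = (l : ℕ) ∧ θ < S k l then S k l else 0) :
    ∀ D : Matrix (Fin p) (Fin q) ℝ,
      (∑ i, ∑ j, ((Z - U * T * Vᵀ) i j) ^ 2) + θ ^ 2 * ((U * T * Vᵀ).rank : ℝ)
        ≤ (∑ i, ∑ j, ((Z - D) i j) ^ 2) + θ ^ 2 * (D.rank : ℝ) := by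
  intro D
  have hUU : U * Uᵀ = 1 := mul_eq_one_comm.mp hU
  have hVV : V * Vᵀ = 1 := mul_eq_one_comm.mp hV
  set M : Matrix (Fin p) (Fin q) ℝ := Uᵀ * D * V with hM
  have hθ2 : (0 : ℝ) ≤ θ ^ 2 := sq_nonneg θ
  -- Z - D = U * (S - M) * Vᵀ
  have hZD : Z - D = U * (S - M) * Vᵀ := by
    rw [hZ, hM, Matrix.mul_sub, Matrix.sub_mul]
    congr 1
    refine Eq.symm ?_
    calc U * (Uᵀ * D * V) * Vᵀ = (U * Uᵀ) * D * (V * Vᵀ) := by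
          simp only [Matrix.mul_assoc]
      _ = D := by rw [hUU, hVV, Matrix.one_mul, Matrix.mul_one]
  have hZT : Z - U * T * Vᵀ = U * (S - T) * Vᵀ := by
    rw [hZ, Matrix.mul_sub, Matrix.sub_mul]
  have h1 : ∑ i, ∑ j, ((Z - U * T * Vᵀ) i j) ^ 2 = ∑ i, ∑ j, ((S - T) i j) ^ 2 := by
    rw [hZT]; exact frob_conj U V hU hV (S - T)
  have h2 : ∑ i, ∑ j, ((Z - D) i j) ^ 2 = ∑ i, ∑ j, ((S - M) i j) ^ 2 := by
    rw [hZD]; exact frob_conj U V hU hV (S - M)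
  have h3 : (U * T * Vᵀ).rank ≤ T.rank :=
    le_trans (Matrix.rank_mul_le_left (U * T) Vᵀ) (Matrix.rank_mul_le_right U T)
  have h4 : M.rank ≤ D.rank :=
    le_trans (Matrix.rank_mul_le_left (Uᵀ * D) V) (Matrix.rank_mul_le_right Uᵀ D)
  have hcore := diag_core θ hθ S T hSoff hSnn hSdec hT M
  have h3' : θ ^ 2 * ((U * T * Vᵀ).rank : ℝ) ≤ θ ^ 2 * (T.rank : ℝ) :=
    mul_le_mul_of_nonneg_left (Nat.cast_le.mpr h3) hθ2
  have h4' : θ ^ 2 * (M.rank : ℝ) ≤ θ ^ 2 * (D.rank : ℝ) :=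
    mul_le_mul_of_nonneg_left (Nat.cast_le.mpr h4) hθ2
  linarith
end
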